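/- Let g = [[0,1,0,0],[1,0,0,0],[0,0,0,-1],[0,0,-1,0]] and let K¹ be the covariant matrix with rows (0, λ₁, 0, 0), (λ₁, λ₀, 0, 0), (0, 0, λ₇, λ₂), (0, 0, λ₂, λ₇). Then for any λ₀ ≠ 0 the mixed tensor K¹ᵤ^ν = K¹ g⁻¹ is similar to the matrix diag-block consisting of a 2×2 Jordan block with eigenvalue λ₁ together with diag(-(λ₂+λ₇), -(λ₂-λ₇)). -/

import Mathlib

open Matrix

theorem stmt1 (l₀ l₁ l₂ l₇ : ℝ) (h0 : l₀ ≠ 0) :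
    let g : Matrix (Fin 4) (Fin 4) ℝ := !![0,1,0,0; 1,0,0,0; 0,0,0,-1; 0,0,-1,0]
    let K : Matrix (Fin 4) (Fin 4) ℝ :=
      !![0, l₁, 0, 0; l₁, l₀, 0, 0; 0, 0, l₇, l₂; 0, 0, l₂, l₇]
    let J : Matrix (Fin 4) (Fin 4) ℝ :=
      !![l₁, 1, 0, 0; 0, l₁, 0, 0; 0, 0, -(l₂ + l₇), 0; 0, 0, 0, -(l₂ - l₇)]
    ∃ P : Matrix (Fin 4) (Fin 4) ℝ, IsUnit P.det ∧ (K * g) * P = P * J := by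
  intro g K J
  refine ⟨!![0,1,0,0; l₀,0,0,0; 0,0,1,1; 0,0,1,-1], ?_, ?_⟩
  · have h : (!![0,1,0,0; l₀,0,0,0; 0,0,1,1; 0,0,1,-1] : Matrix (Fin 4) (Fin 4) ℝ).det
        = 2 * l₀ := by
      simp [Matrix.det_succ_row_zero, Fin.sum_univ_succ, Fin.succAbove]
      ring
    rw [h]
    exact isUnit_iff_ne_zero.mpr (mul_ne_zero two_ne_zero h0)
  · have hKg : K * g = !![l₁,0,0,0; l₀,l₁,0,0; 0,0,-l₂,-l₇; 0,0,-l₇,-l₂] := by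
      show (!![0, l₁, 0, 0; l₁, l₀, 0, 0; 0, 0, l₇, l₂; 0, 0, l₂, l₇] : Matrix (Fin 4) (Fin 4) ℝ)
          * !![0,1,0,0; 1,0,0,0; 0,0,0,-1; 0,0,-1,0] = _
      ext i j
      fin_cases i <;> fin_cases j <;>
        simp [Matrix.mul_apply, Fin.sum_univ_four]
      all_goals (try simp [Matrix.vecHead, Matrix.vecTail])
      all_goals ring
    rw [hKg]
    show (!![l₁,0,0,0; l₀,l₁,0,0; 0,0,-l₂,-l₇; 0,0,-l₇,-l₂] : Matrix (Fin 4) (Fin 4) ℝ)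
        * !![0,1,0,0; l₀,0,0,0; 0,0,1,1; 0,0,1,-1]
      = !![0,1,0,0; l₀,0,0,0; 0,0,1,1; 0,0,1,-1]
        * !![l₁, 1, 0, 0; 0, l₁, 0, 0; 0, 0, -(l₂ + l₇), 0; 0, 0, 0, -(l₂ - l₇)]
    ext i j
    fin_cases i <;> fin_cases j <;>
      simp [Matrix.mul_apply, Fin.sum_univ_four]
    all_goals (try simp [Matrix.vecHead, Matrix.vecTail])
    all_goals ring
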